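/- Let K be a class of algebras with two binary operations (i.e., of triples (α, s, i) where s, i : α → α → α), and assume K is closed under isomorphic images and under binary products. Define a finite partial algebra to be a finite type P together with two partial binary operations u, v : P → P → Option P. Say an injective map e : P → α weakly embeds (P, u, v) into (α, s, i) ∈ K if for all a, b, c ∈ P: u a b = some c implies s (e a) (e b) = e c, and v a b = some c implies i (e a) (e b) = e c; say e relatively embeds (P, u, v) into (α, s, i) if moreover for all a, b ∈ P: u a b = none implies s (e a) (e b) is not in the range of e, and v a b = none implies i (e a) (e b) is not in the range of e. A member of K is finite if its underlying type is finite. Then the following are equivalent: (r,r) every finite partial algebra that relatively embeds into some member of K relatively embeds into some finite member of K; (r,w) every finite partial algebra that relatively embeds into some member of K weakly embeds into some finite member of K; (w,w) every finite partial algebra that weakly embeds into some member of K weakly embeds into some finite member of K. -/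

import Mathlib

/-- An algebra with two binary operations. -/
structure Alg : Type 1 where
  carrier : Type
  s : carrier → carrier → carrier
  i : carrier → carrier → carrier

/-- `h` is an isomorphism between the algebras `A` and `B`. -/
def AlgIso (A B : Alg) (h : A.carrier → B.carrier) : Prop :=
  Function.Bijective h ∧ (∀ a b, h (A.s a b) = B.s (h a) (h b)) ∧
    (∀ a b, h (A.i a b) = B.i (h a) (h b))

/-- The binary product of two algebras, with componentwise operations. -/
def AlgProd (A B : Alg) : Alg where
  carrier := A.carrier × B.carrier
  s := fun x y => (A.s x.1 y.1, B.s x.2 y.2)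
  i := fun x y => (A.i x.1 y.1, B.i x.2 y.2)

/-- `e` weakly embeds the partial algebra `(P, u, v)` into the algebra `A`. -/
def WeakEmb {P : Type} (u v : P → P → Option P) (A : Alg) (e : P → A.carrier) : Prop :=
  Function.Injective e ∧
    (∀ a b c, u a b = some c → A.s (e a) (e b) = e c) ∧
    (∀ a b c, v a b = some c → A.i (e a) (e b) = e c)

/-- `e` relatively embeds the partial algebra `(P, u, v)` into the algebra `A`. -/
def RelEmb {P : Type} (u v : P → P → Option P) (A : Alg) (e : P → A.carrier) : Prop :=
  WeakEmb u v A e ∧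
    (∀ a b, u a b = none → A.s (e a) (e b) ∉ Set.range e) ∧
    (∀ a b, v a b = none → A.i (e a) (e b) ∉ Set.range e)

/-- For a class of algebras closed under isomorphic images and binary products,
the three variants of the finite embeddability property are equivalent. -/
theorem fep_variants_equivalent (K : Set Alg)
    (hiso : ∀ A B : Alg, (∃ h : A.carrier → B.carrier, AlgIso A B h) → A ∈ K → B ∈ K)
    (hprod : ∀ A ∈ K, ∀ B ∈ K, AlgProd A B ∈ K) :
    List.TFAE
      [∀ (P : Type) [Finite P] (u v : P → P → Option P),
          (∃ A ∈ K, ∃ e : P → A.carrier, RelEmb u v A e) →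
          ∃ A ∈ K, Finite A.carrier ∧ ∃ e : P → A.carrier, RelEmb u v A e,
        ∀ (P : Type) [Finite P] (u v : P → P → Option P),
          (∃ A ∈ K, ∃ e : P → A.carrier, RelEmb u v A e) →
          ∃ A ∈ K, Finite A.carrier ∧ ∃ e : P → A.carrier, WeakEmb u v A e,
        ∀ (P : Type) [Finite P] (u v : P → P → Option P),
          (∃ A ∈ K, ∃ e : P → A.carrier, WeakEmb u v A e) →
          ∃ A ∈ K, Finite A.carrier ∧ ∃ e : P → A.carrier, WeakEmb u v A e] := by
  classical
  tfae_have 1 → 2 := by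
    intro h1 P _ u v hyp
    obtain ⟨A, hA, hfin, e, he⟩ := h1 P u v hyp
    exact ⟨A, hA, hfin, e, he.1⟩
  tfae_have 2 → 3 := by
    intro h2 P _ u v ⟨A, hA, e, he⟩
    obtain ⟨einj, hes, hei⟩ := he
    -- complete the partial operations using A
    set u' : P → P → Option P := fun a b =>
      if h : ∃ c, A.s (e a) (e b) = e c then some h.choose else none with hu'
    set v' : P → P → Option P := fun a b =>
      if h : ∃ c, A.i (e a) (e b) = e c then some h.choose else none with hv'
    have hrel : RelEmb u' v' A e := by
      refine ⟨⟨einj, ?_, ?_⟩, ?_, ?_⟩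
      · intro a b c hc
        simp only [hu'] at hc
        split at hc
        · rename_i h; rw [h.choose_spec]; exact congrArg e (Option.some.inj hc)
        · exact absurd hc (by simp)
      · intro a b c hc
        simp only [hv'] at hc
        split at hc
        · rename_i h; rw [h.choose_spec]; exact congrArg e (Option.some.inj hc)
        · exact absurd hc (by simp)
      · intro a b hn ⟨c, hc⟩
        simp only [hu'] at hn
        split at hn
        · simp at hn
        · rename_i h; exact h ⟨c, hc.symm⟩
      · intro a b hn ⟨c, hc⟩
        simp only [hv'] at hn
        split at hn
        · simp at hn
        · rename_i h; exact h ⟨c, hc.symm⟩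
    obtain ⟨B, hB, hfin, f, finj, hfs, hfi⟩ := h2 P u' v' ⟨A, hA, e, hrel⟩
    refine ⟨B, hB, hfin, f, finj, ?_, ?_⟩
    · intro a b c hc
      have h : ∃ c', A.s (e a) (e b) = e c' := ⟨c, hes a b c hc⟩
      have : u' a b = some c := by
        simp only [hu', dif_pos h]
        exact congrArg some (einj (h.choose_spec.symm.trans (hes a b c hc)))
      exact hfs a b c this
    · intro a b c hc
      have h : ∃ c', A.i (e a) (e b) = e c' := ⟨c, hei a b c hc⟩
      have : v' a b = some c := by
        simp only [hv', dif_pos h]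
        exact congrArg some (einj (h.choose_spec.symm.trans (hei a b c hc)))
      exact hfi a b c this
  tfae_have 3 → 1 := by
    intro h3 P _ u v ⟨A, hA, e, ⟨einj, hes, hei⟩, hrs, hri⟩
    -- marker set
    set S : Set A.carrier := {x | (∃ a b, u a b = none ∧ x = A.s (e a) (e b)) ∨
      (∃ a b, v a b = none ∧ x = A.i (e a) (e b))} with hS
    have hSfin : Finite S := by
      have : S ⊆ (Set.range fun p : P × P => A.s (e p.1) (e p.2)) ∪
          (Set.range fun p : P × P => A.i (e p.1) (e p.2)) := by
        rintro x (⟨a, b, _, rfl⟩ | ⟨a, b, _, rfl⟩)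
        · exact Or.inl ⟨(a, b), rfl⟩
        · exact Or.inr ⟨(a, b), rfl⟩
      exact ((Set.finite_range _).union (Set.finite_range _)).subset this
    have hSnr : ∀ x ∈ S, x ∉ Set.range e := by
      rintro x (⟨a, b, hn, rfl⟩ | ⟨a, b, hn, rfl⟩)
      · exact hrs a b hn
      · exact hri a b hn
    set Q := P ⊕ S with hQ
    have : Finite Q := by infer_instance
    set u' : Q → Q → Option Q := fun x y =>
      match x, y with
      | Sum.inl a, Sum.inl b =>
        if h : ∃ c, u a b = some c then some (Sum.inl h.choose)
        else some (Sum.inr ⟨A.s (e a) (e b),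
          Or.inl ⟨a, b, Option.eq_none_iff_forall_not_mem.2
            (fun c hc => h ⟨c, hc⟩), rfl⟩⟩)
      | _, _ => none with hu'
    set v' : Q → Q → Option Q := fun x y =>
      match x, y with
      | Sum.inl a, Sum.inl b =>
        if h : ∃ c, v a b = some c then some (Sum.inl h.choose)
        else some (Sum.inr ⟨A.i (e a) (e b),
          Or.inr ⟨a, b, Option.eq_none_iff_forall_not_mem.2
            (fun c hc => h ⟨c, hc⟩), rfl⟩⟩)
      | _, _ => none with hv'
    set e' : Q → A.carrier := Sum.elim e Subtype.val with he'
    have e'inj : Function.Injective e' := by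
      rintro (a | x) (b | y) hxy
      · exact congrArg Sum.inl (einj hxy)
      · exact absurd ⟨a, hxy⟩ (hSnr y.1 y.2)
      · exact absurd ⟨b, hxy.symm⟩ (hSnr x.1 x.2)
      · exact congrArg Sum.inr (Subtype.ext hxy)
    have hweak : WeakEmb u' v' A e' := by
      refine ⟨e'inj, ?_, ?_⟩
      · rintro (a | x) (b | y) c hc <;> simp only [hu'] at hc <;> try exact absurd hc (by simp)
        split at hc
        · rename_i h
          rw [← Option.some.inj hc]
          exact hes a b h.choose h.choose_spec
        · rw [← Option.some.inj hc]; rfl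
      · rintro (a | x) (b | y) c hc <;> simp only [hv'] at hc <;> try exact absurd hc (by simp)
        split at hc
        · rename_i h
          rw [← Option.some.inj hc]
          exact hei a b h.choose h.choose_spec
        · rw [← Option.some.inj hc]; rfl
    obtain ⟨B, hB, hfin, f, finj, hfs, hfi⟩ := h3 Q u' v' ⟨A, hA, e', hweak⟩
    refine ⟨B, hB, hfin, f ∘ Sum.inl, ⟨fun a b hab => ?_, ?_, ?_⟩, ?_, ?_⟩
    · exact Sum.inl.inj (finj hab)
    · intro a b c hc
      have h : ∃ c', u a b = some c' := ⟨c, hc⟩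
      have hcc : h.choose = c := Option.some.inj (h.choose_spec.symm.trans hc)
      have : u' (Sum.inl a) (Sum.inl b) = some (Sum.inl c) := by
        simp only [hu', dif_pos h, hcc]
      exact hfs _ _ _ this
    · intro a b c hc
      have h : ∃ c', v a b = some c' := ⟨c, hc⟩
      have hcc : h.choose = c := Option.some.inj (h.choose_spec.symm.trans hc)
      have : v' (Sum.inl a) (Sum.inl b) = some (Sum.inl c) := by
        simp only [hv', dif_pos h, hcc]
      exact hfi _ _ _ this
    · rintro a b hn ⟨c, hc⟩
      have h : ¬ ∃ c', u a b = some c' := by rintro ⟨c', hc'⟩; rw [hn] at hc'; cases hc'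
      have := hfs (Sum.inl a) (Sum.inl b) _ (by simp only [hu', dif_neg h]; rfl)
      simp only [Function.comp_apply] at hc
      rw [← hc] at this
      exact absurd (finj this) (by simp)
    · rintro a b hn ⟨c, hc⟩
      have h : ¬ ∃ c', v a b = some c' := by rintro ⟨c', hc'⟩; rw [hn] at hc'; cases hc'
      have := hfi (Sum.inl a) (Sum.inl b) _ (by simp only [hv', dif_neg h]; rfl)
      simp only [Function.comp_apply] at hc
      rw [← hc] at this
      exact absurd (finj this) (by simp)
  tfae_finish
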